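/- Let α ∈ (0, 1/2], let M be a surjective isometry of ℝ², let R ≥ 5 + 2^{1+1/α} with ‖M(0)‖ ≤ R, and set Γ = M '' {y : y₁ ≥ 0 and y₂ = 0} and Q = M '' {y : y₁ ≥ 0 and 2|y₂| ≤ y₁^α}. Then for every x ∈ ℝ² with x ∉ Q and ‖x‖ ≥ 2R, one has d(x, Γ) ≥ 2^{−2−α} ‖x‖^α. -/
import Mathlib


open Metric Set

noncomputable section

set_option maxHeartbeats 1000000 in
theorem dist_to_ray_estimate (α : ℝ) (hα : 0 < α) (hα' : α ≤ 1 / 2)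
    (M : EuclideanSpace ℝ (Fin 2) ≃ᵢ EuclideanSpace ℝ (Fin 2))
    (R : ℝ) (hR : 5 + 2 ^ (1 + 1 / α) ≤ R) (hRM : ‖M 0‖ ≤ R)
    (Γ Q : Set (EuclideanSpace ℝ (Fin 2)))
    (hΓ : Γ = M '' {y : EuclideanSpace ℝ (Fin 2) | 0 ≤ y 0 ∧ y 1 = 0})
    (hQ : Q = M '' {y : EuclideanSpace ℝ (Fin 2) | 0 ≤ y 0 ∧ 2 * |y 1| ≤ (y 0) ^ α})
    (x : EuclideanSpace ℝ (Fin 2)) (hxQ : x ∉ Q) (hx : 2 * R ≤ ‖x‖) :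
    2 ^ (-2 - α) * ‖x‖ ^ α ≤ infDist x Γ := by
  have h2p : (0:ℝ) < 2 ^ (1 + 1/α) := Real.rpow_pos_of_pos two_pos _
  have hx10 : (10:ℝ) ≤ ‖x‖ := by linarith
  have hx1 : (1:ℝ) ≤ ‖x‖ := by linarith
  set y := M.symm x with hydef
  have hxy : M y = x := M.apply_symm_apply x
  have hny : ‖x‖ / 2 ≤ ‖y‖ := by
    have h1 : dist x (M 0) = ‖y‖ := by
      rw [← hxy, M.dist_eq, dist_zero_right]
    have h2 : ‖x‖ ≤ dist x (M 0) + ‖M 0‖ := by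
      have := dist_triangle x (M 0) 0
      simpa [dist_zero_right] using this
    linarith
  have hyQ : ¬ (0 ≤ y 0 ∧ 2 * |y 1| ≤ (y 0) ^ α) := by
    intro h
    exact hxQ (hQ ▸ ⟨y, h, hxy⟩)
  have hΓne : Γ.Nonempty := ⟨M 0, hΓ ▸ ⟨0, by constructor <;> simp, rfl⟩⟩
  -- basic numeric facts
  have hxa : ‖x‖ ^ α ≤ ‖x‖ := by
    calc ‖x‖ ^ α ≤ ‖x‖ ^ (1:ℝ) :=
          Real.rpow_le_rpow_of_exponent_le hx1 (by linarith)
      _ = ‖x‖ := Real.rpow_one _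
  have hxapos : 0 < ‖x‖ ^ α := Real.rpow_pos_of_pos (by linarith) _
  have h2c : (2:ℝ) ^ (-2 - α) ≤ 1/4 := by
    calc (2:ℝ) ^ (-2 - α) ≤ 2 ^ (-2 : ℝ) :=
          Real.rpow_le_rpow_of_exponent_le one_le_two (by linarith)
      _ = 1/4 := by
          rw [show (-2:ℝ) = ((-2:ℤ):ℝ) by norm_num, Real.rpow_intCast]
          norm_num
  have h2cpos : (0:ℝ) < 2 ^ (-2 - α) := Real.rpow_pos_of_pos two_pos _
  have hs2 : Real.sqrt 2 ≤ 2 := by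
    nlinarith [Real.sq_sqrt (by norm_num : (0:ℝ) ≤ 2), Real.sqrt_nonneg 2]
  have hs2pos : (0:ℝ) < Real.sqrt 2 := Real.sqrt_pos.mpr (by norm_num)
  -- norm of y in coordinates
  have hnyeq : ‖y‖ = Real.sqrt ((y 0)^2 + (y 1)^2) := by
    rw [EuclideanSpace.norm_eq, Fin.sum_univ_two]
    norm_num [sq_abs, Real.norm_eq_abs]
  -- reduce to pointwise bound
  by_contra hcon
  push_neg at hcon
  obtain ⟨p, hp, hplt⟩ := (infDist_lt_iff hΓne).mp hcon
  rw [hΓ] at hp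
  obtain ⟨q, ⟨hq0, hq1⟩, rfl⟩ := hp
  have hplt' : dist y q < 2 ^ (-2 - α) * ‖x‖ ^ α := by
    have : dist x (M q) = dist y q := by rw [← hxy, M.dist_eq]
    linarith [hplt, this.symm.le, this.le]
  clear hplt
  -- distance in coordinates
  have hdist : dist y q = Real.sqrt ((dist (y 0) (q 0))^2 + |y 1|^2) := by
    rw [EuclideanSpace.dist_eq, Fin.sum_univ_two, hq1]
    simp [Real.dist_eq]
  have hb_le : |y 1| ≤ dist y q := by
    rw [hdist]
    have := Real.sqrt_le_sqrt (show |y 1|^2 ≤ (dist (y 0) (q 0))^2 + |y 1|^2 from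
      le_add_of_nonneg_left (by positivity))
    rwa [Real.sqrt_sq (abs_nonneg _)] at this
  -- now the case analysis
  rcases lt_or_ge (y 0) 0 with hneg | hpos
  · -- y 0 < 0 : dist ≥ ‖y‖ ≥ ‖x‖/2
    have hd0 : |y 0| ≤ dist (y 0) (q 0) := by
      rw [Real.dist_eq, abs_of_neg hneg, abs_of_nonpos (by linarith)]
      linarith
    have hge : ‖y‖ ≤ dist y q := by
      rw [hdist, hnyeq]
      apply Real.sqrt_le_sqrt
      have h2 := pow_le_pow_left₀ (abs_nonneg (y 0)) hd0 2
      have h3 := sq_abs (y 0)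
      have h4 := sq_abs (y 1)
      linarith
    have hmul : 2 ^ (-2 - α) * ‖x‖ ^ α ≤ (1/4) * ‖x‖ :=
      mul_le_mul h2c hxa hxapos.le (by norm_num)
    linarith [hplt']
  · have hb : (y 0) ^ α < 2 * |y 1| := lt_of_not_ge fun h => hyQ ⟨hpos, h⟩
    rcases le_or_gt (y 0) (|y 1|) with h1 | h1
    · -- |y 1| ≥ y 0 : |y 1| ≥ ‖x‖/4 suffices
      have hyb : ‖y‖ ≤ Real.sqrt 2 * |y 1| := by
        rw [hnyeq]
        calc Real.sqrt ((y 0)^2 + (y 1)^2) ≤ Real.sqrt (2 * |y 1|^2) := by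
              apply Real.sqrt_le_sqrt
              have h2 := pow_le_pow_left₀ hpos h1 2
              have h3 := sq_abs (y 1)
              linarith
          _ = Real.sqrt 2 * |y 1| := by
              rw [Real.sqrt_mul (by norm_num), Real.sqrt_sq (abs_nonneg _)]
      have hb4 : ‖x‖ / 4 ≤ |y 1| := by
        have := mul_le_mul_of_nonneg_right hs2 (abs_nonneg (y 1))
        linarith
      have hmul : 2 ^ (-2 - α) * ‖x‖ ^ α ≤ (1/4) * ‖x‖ :=
        mul_le_mul h2c hxa hxapos.le (by norm_num)
      linarith [hplt']
    · -- |y 1| < y 0 : y 0 is large, use the curve condition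
      have hya : ‖y‖ ≤ Real.sqrt 2 * (y 0) := by
        rw [hnyeq]
        calc Real.sqrt ((y 0)^2 + (y 1)^2) ≤ Real.sqrt (2 * (y 0)^2) := by
              apply Real.sqrt_le_sqrt
              have h2 := pow_le_pow_left₀ (abs_nonneg (y 1)) h1.le 2
              have h3 := sq_abs (y 1)
              linarith
          _ = Real.sqrt 2 * (y 0) := by
              rw [Real.sqrt_mul (by norm_num), Real.sqrt_sq hpos]
      have ha : ‖x‖ / (2 * Real.sqrt 2) ≤ y 0 := by
        rw [div_le_iff₀ (by positivity)]
        calc ‖x‖ ≤ 2 * ‖y‖ := by linarith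
          _ ≤ 2 * (Real.sqrt 2 * (y 0)) := by linarith
          _ = y 0 * (2 * Real.sqrt 2) := by ring
      have hxpos : (0:ℝ) < ‖x‖ / (2 * Real.sqrt 2) := by positivity
      have hmono : (‖x‖ / (2 * Real.sqrt 2)) ^ α ≤ (y 0) ^ α :=
        Real.rpow_le_rpow hxpos.le ha hα.le
      -- rewrite 2√2 as 2^(3/2)
      have hss : (2 * Real.sqrt 2 : ℝ) = 2 ^ ((3:ℝ)/2) := by
        rw [Real.sqrt_eq_rpow]
        rw [show (2:ℝ) * 2 ^ ((1:ℝ)/2) = 2 ^ (1:ℝ) * 2 ^ ((1:ℝ)/2) by rw [Real.rpow_one],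
          ← Real.rpow_add two_pos]
        norm_num
      have hsplit : (‖x‖ / (2 * Real.sqrt 2)) ^ α = ‖x‖ ^ α / 2 ^ ((3:ℝ)/2 * α) := by
        rw [Real.div_rpow (norm_nonneg x) (by positivity), hss, ← Real.rpow_mul (by norm_num)]
      have hkey : 2 ^ (-2 - α) * ‖x‖ ^ α ≤ (‖x‖ / (2 * Real.sqrt 2)) ^ α / 2 := by
        rw [hsplit, div_div]
        rw [div_eq_mul_inv, mul_comm (‖x‖ ^ α)]
        apply mul_le_mul_of_nonneg_right _ hxapos.le
        have : ((2:ℝ) ^ ((3:ℝ)/2 * α) * 2)⁻¹ = 2 ^ (-((3:ℝ)/2 * α) - 1) := by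
          rw [show (-((3:ℝ)/2 * α) - 1) = -((3:ℝ)/2 * α + 1) by ring, Real.rpow_neg (by norm_num),
            Real.rpow_add two_pos, Real.rpow_one]
        rw [this]
        exact Real.rpow_le_rpow_of_exponent_le one_le_two (by linarith)
      have : (‖x‖ / (2 * Real.sqrt 2)) ^ α / 2 ≤ |y 1| := by
        have := hmono.trans_lt hb
        linarith
      linarith [hplt']
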